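/- arXiv:1902.05817 — 2 statements merged into one kernel-verified Lean document; each statement's English description precedes it below -/
import Mathlib

section
/- Let T be a triangulated category with coproducts and S a set of objects of T. Then Susp(S)^⊥ = S^{⊥_{≤0}} and Loc(S)^⊥ = S^{⊥_Z}. Consequently, Susp(S) ⊆ ^⊥(S^{⊥_{≤0}}) and Loc(S) ⊆ ^⊥(S^{⊥_Z}). -/
/-!
Common definitions for formalising "Partial silting objects and smashing subcategories"
by Angeleri Hügel, Marks, Vitória.
-/

namespace PaperSmashing

open CategoryTheory CategoryTheory.Limits CategoryTheory.Pretriangulated Opposite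

universe v u

variable (C : Type u) [Category.{v} C] [HasZeroObject C] [HasShift C ℤ] [Preadditive C]
  [∀ n : ℤ, (CategoryTheory.shiftFunctor C n).Additive] [Pretriangulated C]

variable {C}

/-- `X` is a retract (direct summand) of `Y`. -/
def IsRetract (X Y : C) : Prop := ∃ (i : X ⟶ Y) (r : Y ⟶ X), i ≫ r = 𝟙 X

/-- `S^{⊥_I}`: the objects `X` such that `Hom(A, X⟦n⟧) = 0` for all `A ∈ S` and `n ∈ I`. -/
def perpSet (S : Set C) (I : Set ℤ) : Set C :=
  {X : C | ∀ A ∈ S, ∀ n ∈ I, ∀ f : A ⟶ (X⟦n⟧), f = 0}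

/-- `S^⊥ = Ker Hom(S, -)`. -/
def perp (S : Set C) : Set C := {X : C | ∀ A ∈ S, ∀ f : A ⟶ X, f = 0}

/-- `^⊥S = Ker Hom(-, S)`. -/
def leftPerp (S : Set C) : Set C := {X : C | ∀ A ∈ S, ∀ f : X ⟶ A, f = 0}

/-- `T^{⊥_{>0}}`. -/
def objPerpGT (T : C) : Set C := perpSet {T} {n : ℤ | 0 < n}

/-- `T^{⊥_{≤0}}`. -/
def objPerpLE (T : C) : Set C := perpSet {T} {n : ℤ | n ≤ 0}

/-- `T^{⊥_ℤ}`. -/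
def objPerpZ (T : C) : Set C := perpSet {T} (Set.univ : Set ℤ)

/-- Closure under direct summands. -/
def SummandClosed (S : Set C) : Prop := ∀ ⦃X Y : C⦄, IsRetract X Y → Y ∈ S → X ∈ S

/-- Closure under isomorphisms. -/
def IsoClosed (S : Set C) : Prop := ∀ ⦃X Y : C⦄, (X ≅ Y) → X ∈ S → Y ∈ S

/-- A torsion pair `(V, W)` in a triangulated category. -/
structure IsTorsionPair (V W : Set C) : Prop where
  summand_left : SummandClosed V
  summand_right : SummandClosed W
  hom_zero : ∀ ⦃A B : C⦄, A ∈ V → B ∈ W → ∀ f : A ⟶ B, f = 0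
  exists_triangle : ∀ X : C, ∃ (A B : C) (_ : A ∈ V) (_ : B ∈ W)
    (f : A ⟶ X) (g : X ⟶ B) (h : B ⟶ (A⟦(1 : ℤ)⟧)), Triangle.mk f g h ∈ distTriang C

/-- Closure under extensions. -/
def ExtensionClosed (S : Set C) : Prop :=
  ∀ T : Triangle C, T ∈ (distTriang C) → T.obj₁ ∈ S → T.obj₃ ∈ S → T.obj₂ ∈ S

/-- Closure under positive shifts. -/
def ShiftClosedPos (S : Set C) : Prop := ∀ ⦃X : C⦄, X ∈ S → (X⟦(1 : ℤ)⟧) ∈ S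

/-- A suspended subcategory: closed under isomorphisms, extensions and positive shifts. -/
def Suspended (S : Set C) : Prop := IsoClosed S ∧ ExtensionClosed S ∧ ShiftClosedPos S

/-- A t-structure: a torsion pair whose left class is suspended. -/
def IsTStructure (V W : Set C) : Prop := IsTorsionPair V W ∧ Suspended V

/-- A co-t-structure: a torsion pair whose right class is suspended. -/
def IsCoTStructure (V W : Set C) : Prop := IsTorsionPair V W ∧ Suspended W

/-- A TTF triple. -/
structure IsTTF (U V W : Set C) : Prop where
  tp₁ : IsTorsionPair U V
  tp₂ : IsTorsionPair V W

/-- A suspended TTF triple. -/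
def SuspendedTTF (U V W : Set C) : Prop := IsTTF U V W ∧ Suspended V

/-- The coheart `U⟦1⟧ ∩ V` of a co-t-structure `(U, V)`. -/
def Coheart (U V : Set C) : Set C := {X : C | (X⟦(-1 : ℤ)⟧) ∈ U} ∩ V

/-- `∩_{n ∈ ℤ} V⟦n⟧ = 0`. -/
def LeftNondegenerate (V : Set C) : Prop := ∀ X : C, (∀ n : ℤ, (X⟦n⟧) ∈ V) → IsZero X

/-- `∩_{n ∈ ℤ} W⟦n⟧ = 0`. -/
def RightNondegenerate (W : Set C) : Prop := ∀ X : C, (∀ n : ℤ, (X⟦n⟧) ∈ W) → IsZero X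

/-- Closure under (small) coproducts, phrased via colimit cofans. -/
def CoprodClosed (S : Set C) : Prop :=
  ∀ ⦃ι : Type v⦄ (f : ι → C) (c : Cofan f), IsColimit c → (∀ i, f i ∈ S) → c.pt ∈ S

/-- A localising subcategory: a triangulated subcategory closed under coproducts. -/
structure IsLocalising (S : Set C) : Prop where
  iso : IsoClosed S
  zero : ∀ X : C, IsZero X → X ∈ S
  shift : ∀ (n : ℤ) ⦃X : C⦄, X ∈ S → (X⟦n⟧) ∈ S
  ext : ExtensionClosed S
  coprod : CoprodClosed S

/-- `Loc S`: the smallest localising subcategory containing `S`. -/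
def Loc (A : Set C) : Set C := ⋂₀ {S : Set C | IsLocalising S ∧ A ⊆ S}

/-- A thick subcategory: a triangulated subcategory closed under direct summands. -/
structure IsThick (S : Set C) : Prop where
  iso : IsoClosed S
  zero : ∀ X : C, IsZero X → X ∈ S
  shift : ∀ (n : ℤ) ⦃X : C⦄, X ∈ S → (X⟦n⟧) ∈ S
  ext : ExtensionClosed S
  summand : SummandClosed S

/-- `Thick S`: the smallest thick subcategory containing `S`. -/
def Thick (A : Set C) : Set C := ⋂₀ {S : Set C | IsThick S ∧ A ⊆ S}

/-- `Susp S`: the smallest cocomplete suspended subcategory containing `S`. -/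
def SuspClosure (A : Set C) : Set C :=
  ⋂₀ {S : Set C | Suspended S ∧ CoprodClosed S ∧ A ⊆ S}

/-- A subcategory is coreflective if its inclusion functor admits a right adjoint. -/
def Coreflective (S : Set C) : Prop :=
  ∃ G : C ⥤ CategoryTheory.ObjectProperty.FullSubcategory (fun X : C => X ∈ S),
    Nonempty (CategoryTheory.ObjectProperty.ι (fun X : C => X ∈ S) ⊣ G)

/-- A smashing subcategory: a coreflective localising subcategory `S` such that `S^⊥` is
closed under coproducts. -/
def Smashing (S : Set C) : Prop := IsLocalising S ∧ Coreflective S ∧ CoprodClosed (perp S)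

/-- An aisle: a suspended coreflective subcategory. -/
def IsAisle (S : Set C) : Prop := Suspended S ∧ Coreflective S

/-- A compact object: `Hom(X, -)` commutes with (small) coproducts. -/
def IsCompactObj (X : C) : Prop :=
  ∀ ι : Type v, Nonempty (PreservesColimitsOfShape (Discrete ι) (coyoneda.obj (op X)))

/-- `U_T := ^⊥(T^{⊥_{≤0}})`. -/
def USet (T : C) : Set C := leftPerp (objPerpLE T)

/-- A partial silting object. -/
structure IsPartialSilting (T : C) : Prop where
  ps1 : IsTorsionPair (USet T) (objPerpLE T)
  ps2 : USet T ⊆ objPerpGT T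
  ps3 : CoprodClosed (objPerpGT T)

/-- A silting object: `(T^{⊥_{>0}}, T^{⊥_{≤0}})` is a t-structure. -/
def IsSilting (T : C) : Prop := IsTStructure (objPerpGT T) (objPerpLE T)

/-- `Add X`: direct summands of coproducts of copies of `X`. -/
def AddClosure (X : C) : Set C :=
  {Y : C | ∃ (ι : Type v) (c : Cofan (fun _ : ι => X)),
    Nonempty (IsColimit c) ∧ IsRetract Y c.pt}

/-- A torsion pair in the triangulated subcategory determined by the class `L` of objects. -/
structure IsTorsionPairIn (L V W : Set C) : Prop where
  subset_left : V ⊆ L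
  subset_right : W ⊆ L
  summand_left : ∀ ⦃X Y : C⦄, X ∈ L → IsRetract X Y → Y ∈ V → X ∈ V
  summand_right : ∀ ⦃X Y : C⦄, X ∈ L → IsRetract X Y → Y ∈ W → X ∈ W
  hom_zero : ∀ ⦃A B : C⦄, A ∈ V → B ∈ W → ∀ f : A ⟶ B, f = 0
  exists_triangle : ∀ X ∈ L, ∃ (A B : C) (_ : A ∈ V) (_ : B ∈ W)
    (f : A ⟶ X) (g : X ⟶ B) (h : B ⟶ (A⟦(1 : ℤ)⟧)), Triangle.mk f g h ∈ distTriang C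

/-- A t-structure in the triangulated subcategory determined by `L`. -/
structure IsTStructureIn (L V W : Set C) : Prop where
  tp : IsTorsionPairIn L V W
  iso_left : ∀ ⦃X Y : C⦄, (X ≅ Y) → X ∈ V → Y ∈ L → Y ∈ V
  ext_left : ∀ T : Triangle C, T ∈ (distTriang C) →
    T.obj₁ ∈ V → T.obj₃ ∈ V → T.obj₂ ∈ L → T.obj₂ ∈ V
  shift_left : ∀ ⦃X : C⦄, X ∈ V → (X⟦(1 : ℤ)⟧) ∈ V

/-- `T` is a silting object of the triangulated subcategory determined by `L`. -/
def IsSiltingIn (L : Set C) (T : C) : Prop :=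
  T ∈ L ∧ IsTStructureIn L (L ∩ objPerpGT T) (L ∩ objPerpLE T)

/-- Left perpendicular computed inside `L`. -/
def leftPerpIn (L S : Set C) : Set C := {X : C | X ∈ L ∧ ∀ A ∈ S, ∀ f : X ⟶ A, f = 0}

/-- Closure under coproducts, relative to `L`. -/
def CoprodClosedIn (L S : Set C) : Prop :=
  ∀ ⦃ι : Type v⦄ (f : ι → C) (c : Cofan f), IsColimit c → (∀ i, f i ∈ S) →
    c.pt ∈ L → c.pt ∈ S

/-- `T` is a partial silting object of the triangulated subcategory determined by `L`. -/
def IsPartialSiltingIn (L : Set C) (T : C) : Prop :=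
  T ∈ L ∧
  IsTorsionPairIn L (leftPerpIn L (L ∩ objPerpLE T)) (L ∩ objPerpLE T) ∧
  leftPerpIn L (L ∩ objPerpLE T) ⊆ objPerpGT T ∧
  CoprodClosedIn L (L ∩ objPerpGT T)

section WellGenerated

variable [HasCoproducts.{v} C]

/-- An `α`-small object. -/
def AlphaSmall (α : Cardinal.{v}) (X : C) : Prop :=
  ∀ ⦃ι : Type v⦄ (Y : ι → C) (h : X ⟶ ∐ Y),
    ∃ (Ω : Set ι) (g : X ⟶ ∐ fun ω : Ω => Y ω),
      Cardinal.mk Ω < α ∧ g ≫ Sigma.desc (fun ω : Ω => Sigma.ι Y ω.1) = h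

variable (C)

/-- A well generated triangulated category. -/
def WellGenerated : Prop :=
  ∃ α : Cardinal.{v}, α.IsRegular ∧ ∃ S : Set C,
    (∀ X ∈ perpSet S (Set.univ : Set ℤ), IsZero X) ∧
    (∀ ⦃ι : Type v⦄ (X Y : ι → C) (g : ∀ i, X i ⟶ Y i),
      (∀ i, ∀ G ∈ S, Function.Surjective fun f : G ⟶ X i => f ≫ g i) →
      ∀ G ∈ S, Function.Surjective fun f : G ⟶ ∐ X => f ≫ Limits.Sigma.map g) ∧
    (∀ G ∈ S, AlphaSmall α G)

end WellGenerated

section Brown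

/-- A contravariant cohomological functor. -/
def IsCohomologicalContra (H : Cᵒᵖ ⥤ AddCommGrpCat.{v}) : Prop :=
  ∀ T : Triangle C, T ∈ (distTriang C) →
    Function.Exact (H.map T.mor₂.op) (H.map T.mor₁.op)

/-- `H` sends coproducts to products. -/
def SendsCoproductsToProducts (H : Cᵒᵖ ⥤ AddCommGrpCat.{v}) : Prop :=
  ∀ ⦃ι : Type v⦄ (Y : ι → C) (c : Cofan Y), IsColimit c →
    Function.Bijective (fun (x : H.obj (op c.pt)) (i : ι) => H.map (c.inj i).op x)

/-- `H` is representable, i.e. naturally isomorphic to `Hom(-, X)` for some `X`. -/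
def RepresentableContra (H : Cᵒᵖ ⥤ AddCommGrpCat.{v}) : Prop :=
  ∃ (X : C) (e : ∀ Y : C, (Y ⟶ X) ≃ H.obj (op Y)),
    ∀ ⦃Y Z : C⦄ (f : Y ⟶ Z) (g : Z ⟶ X), e Y (f ≫ g) = H.map f.op (e Z g)

/-- A covariant cohomological functor. -/
def IsCohomologicalCov (H : C ⥤ AddCommGrpCat.{v}) : Prop :=
  ∀ T : Triangle C, T ∈ (distTriang C) →
    Function.Exact (H.map T.mor₁) (H.map T.mor₂)

/-- `H` sends products to products. -/
def SendsProductsToProducts (H : C ⥤ AddCommGrpCat.{v}) : Prop :=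
  ∀ ⦃ι : Type v⦄ (Y : ι → C) (c : Fan Y), IsLimit c →
    Function.Bijective (fun (x : H.obj c.pt) (i : ι) => H.map (c.proj i) x)

/-- `H` is corepresentable, i.e. naturally isomorphic to `Hom(X, -)` for some `X`. -/
def CorepresentableCov (H : C ⥤ AddCommGrpCat.{v}) : Prop :=
  ∃ (X : C) (e : ∀ Y : C, (X ⟶ Y) ≃ H.obj Y),
    ∀ ⦃Y Z : C⦄ (f : Y ⟶ Z) (g : X ⟶ Y), e Z (g ≫ f) = H.map f (e Y g)

variable (C)

/-- Brown representability. -/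
def BrownRepresentability : Prop :=
  ∀ H : Cᵒᵖ ⥤ AddCommGrpCat.{v}, IsCohomologicalContra H →
    SendsCoproductsToProducts H → RepresentableContra H

/-- Dual Brown representability: the category is complete and every covariant cohomological
functor sending products to products is corepresentable. -/
def DualBrownRepresentability : Prop :=
  HasProducts.{v} C ∧
  ∀ H : C ⥤ AddCommGrpCat.{v}, IsCohomologicalCov H →
    SendsProductsToProducts H → CorepresentableCov H

end Brown

section Aux

lemma shift_map_eq_zero_iff {A B : C} (f : A ⟶ B) (m : ℤ) :
    (shiftFunctor C m).map f = 0 ↔ f = 0 := by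
  constructor
  · intro h
    apply (shiftFunctor C m).map_injective
    simpa using h
  · intro h
    simp [h]

/-- `{Y | Hom(Y, X⟦n⟧) = 0 for all n ∈ I}`. -/
def rperp (X : C) (I : Set ℤ) : Set C := {Y : C | ∀ n ∈ I, ∀ f : Y ⟶ (X⟦n⟧), f = 0}

lemma rperp_iso (X : C) (I : Set ℤ) : IsoClosed (rperp X I) := by
  intro Y Z e hY n hn f
  have h := hY n hn (e.hom ≫ f)
  calc f = e.inv ≫ (e.hom ≫ f) := by simp
    _ = 0 := by rw [h, comp_zero]

lemma rperp_ext (X : C) (I : Set ℤ) : ExtensionClosed (rperp X I) := by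
  intro T hT h1 h3 n hn f
  obtain ⟨g, hg⟩ := T.yoneda_exact₂ hT f (h1 n hn _)
  rw [hg, h3 n hn g, comp_zero]

lemma rperp_coprod (X : C) (I : Set ℤ) : CoprodClosed (rperp X I) := by
  intro ι f c hc hf n hn g
  apply Cofan.IsColimit.hom_ext hc
  intro i
  rw [hf i n hn (c.inj i ≫ g), comp_zero]

lemma rperp_zero (X : C) (I : Set ℤ) : ∀ Y : C, IsZero Y → Y ∈ rperp X I := by
  intro Y hY n hn f
  exact hY.eq_of_src f 0

lemma rperp_shift (X : C) (I : Set ℤ) (m : ℤ) (hI : ∀ n ∈ I, n - m ∈ I)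
    {Y : C} (hY : Y ∈ rperp X I) : (Y⟦m⟧) ∈ rperp X I := by
  intro n hn f
  rw [← shift_map_eq_zero_iff f (-m)]
  have hg := hY (n - m) (hI n hn)
    ((shiftFunctorCompIsoId C m (-m) (by ring)).inv.app Y ≫
      (shiftFunctor C (-m)).map f ≫ (shiftFunctorAdd' C n (-m) (n - m) (by ring)).inv.app X)
  rw [← cancel_epi ((shiftFunctorCompIsoId C m (-m) (by ring)).inv.app Y),
    ← cancel_mono ((shiftFunctorAdd' C n (-m) (n - m) (by ring)).inv.app X)]
  simpa using hg

lemma hom_zero_of_mem_rperp {X Y : C} {I : Set ℤ} (h0 : (0 : ℤ) ∈ I)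
    (hY : Y ∈ rperp X I) (f : Y ⟶ X) : f = 0 := by
  have h := hY 0 h0 (f ≫ (shiftFunctorZero C ℤ).inv.app X)
  rw [← cancel_mono ((shiftFunctorZero C ℤ).inv.app X), h, zero_comp]

lemma zero_of_shift_hom_zero {A X : C} (n : ℤ)
    (h : ∀ g : (A⟦-n⟧) ⟶ X, g = 0) (f : A ⟶ (X⟦n⟧)) : f = 0 := by
  rw [← shift_map_eq_zero_iff f (-n)]
  have hg := h ((shiftFunctor C (-n)).map f ≫ (shiftFunctorCompIsoId C n (-n) (by ring)).hom.app X)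
  rw [← cancel_mono ((shiftFunctorCompIsoId C n (-n) (by ring)).hom.app X)]
  simpa using hg

lemma susp_shiftNat (S : Set C) {A : C} (hA : A ∈ SuspClosure S) :
    ∀ k : ℕ, (A⟦(k : ℤ)⟧) ∈ SuspClosure S := by
  intro k
  induction k with
  | zero =>
      intro T hT
      exact hT.1.1 ((shiftFunctorZero C ℤ).symm.app A) (hA T hT)
  | succ k ih =>
      intro T hT
      have h1 : ((A⟦(k : ℤ)⟧)⟦(1 : ℤ)⟧) ∈ T := hT.1.2.2 (ih T hT)
      exact hT.1.1 ((shiftFunctorAdd' C (k : ℤ) 1 ((k : ℤ) + 1) rfl).symm.app A)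
        (by simpa using h1)

lemma loc_shift (S : Set C) {A : C} (hA : A ∈ Loc S) (n : ℤ) : (A⟦n⟧) ∈ Loc S := by
  intro T hT
  exact hT.1.shift n (hA T hT)

end Aux

/-- For a set of objects `S` of a triangulated category with coproducts:
`Susp(S)^⊥ = S^{⊥_{≤0}}`, `Loc(S)^⊥ = S^{⊥_ℤ}`, and consequently
`Susp(S) ⊆ ^⊥(S^{⊥_{≤0}})` and `Loc(S) ⊆ ^⊥(S^{⊥_ℤ})`. -/
theorem statement_16 {C : Type u} [Category.{v} C] [HasZeroObject C] [HasShift C ℤ]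
    [Preadditive C] [∀ n : ℤ, (CategoryTheory.shiftFunctor C n).Additive] [Pretriangulated C]
    [HasCoproducts.{v} C] (S : Set C) :
    perp (SuspClosure S) = perpSet S {n : ℤ | n ≤ 0} ∧
    perp (Loc S) = perpSet S (Set.univ : Set ℤ) ∧
    SuspClosure S ⊆ leftPerp (perpSet S {n : ℤ | n ≤ 0}) ∧
    Loc S ⊆ leftPerp (perpSet S (Set.univ : Set ℤ)) := by
  have hSusp : perp (SuspClosure S) = perpSet S {n : ℤ | n ≤ 0} := by
    ext X
    constructor
    · intro hX A hA n hn f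
      apply zero_of_shift_hom_zero n
      intro g
      apply hX
      have h0 : (0 : ℤ) ≤ -n := by simp only [Set.mem_setOf_eq] at hn; omega
      have := susp_shiftNat S (by intro T hT; exact hT.2.2 hA : A ∈ SuspClosure S) (-n).toNat
      rwa [Int.toNat_of_nonneg h0] at this
    · intro hX A hA f
      have hmem : A ∈ rperp X {n : ℤ | n ≤ 0} := by
        apply hA
        refine ⟨⟨rperp_iso X _, rperp_ext X _, ?_⟩, rperp_coprod X _, ?_⟩
        · intro Y hY
          exact rperp_shift X _ 1 (fun n hn => by simp only [Set.mem_setOf_eq] at hn ⊢; omega) hY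
        · intro B hB n hn g
          exact hX B hB n hn g
      exact hom_zero_of_mem_rperp (by simp) hmem f
  have hLoc : perp (Loc S) = perpSet S (Set.univ : Set ℤ) := by
    ext X
    constructor
    · intro hX A hA n _ f
      apply zero_of_shift_hom_zero n
      intro g
      apply hX
      exact loc_shift S (by intro T hT; exact hT.2 hA : A ∈ Loc S) (-n)
    · intro hX A hA f
      have hmem : A ∈ rperp X (Set.univ : Set ℤ) := by
        apply hA
        refine ⟨⟨rperp_iso X _, rperp_zero X _, ?_, rperp_ext X _, rperp_coprod X _⟩, ?_⟩
        · intro m Y hY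
          exact rperp_shift X _ m (fun n _ => Set.mem_univ _) hY
        · intro B hB n _ g
          exact hX B hB n (Set.mem_univ _) g
      exact hom_zero_of_mem_rperp (Set.mem_univ _) hmem f
  refine ⟨hSusp, hLoc, ?_, ?_⟩
  · intro Y hY X hX f
    have : X ∈ perp (SuspClosure S) := by rw [hSusp]; exact hX
    exact this Y hY f
  · intro Y hY X hX f
    have : X ∈ perp (Loc S) := by rw [hLoc]; exact hX
    exact this Y hY f

end PaperSmashing
end

section
/- Let T be a well generated triangulated category satisfying dual Brown representability and let T be a partial silting object of T. Then the coheart of the co-t-structure (^⊥(T^{⊥_{>0}}), T^{⊥_{>0}}), namely ^⊥(T^{⊥_{>0}})[1] ∩ T^{⊥_{>0}}, equals Add(T), the class of direct summands of coproducts of copies of T. -/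
/-!
Common definitions for formalising "Partial silting objects and smashing subcategories"
by Angeleri Hügel, Marks, Vitória.
-/

namespace PaperSmashing

open CategoryTheory CategoryTheory.Limits CategoryTheory.Pretriangulated Opposite

universe v u

variable (C : Type u) [Category.{v} C] [HasZeroObject C] [HasShift C ℤ] [Preadditive C]
  [∀ n : ℤ, (CategoryTheory.shiftFunctor C n).Additive] [Pretriangulated C]

variable {C}

section Aux

variable {C : Type u} [Category.{v} C] [HasZeroObject C] [HasShift C ℤ]
    [Preadditive C] [∀ n : ℤ, (CategoryTheory.shiftFunctor C n).Additive] [Pretriangulated C]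

set_option linter.unusedSectionVars false

/-- `objPerpGT` is closed under retracts. -/
lemma objPerpGT_retract {T X Y : C} (hY : Y ∈ objPerpGT T) (h : IsRetract X Y) :
    X ∈ objPerpGT T := by
  obtain ⟨i, r, hir⟩ := h
  intro A hA n hn f
  have h1 : f ≫ (shiftFunctor C n).map i = 0 := hY A hA n hn _
  have h2 : f = f ≫ (shiftFunctor C n).map i ≫ (shiftFunctor C n).map r := by
    rw [← Functor.map_comp, hir, CategoryTheory.Functor.map_id, Category.comp_id]
  rw [h2, ← Category.assoc, h1, zero_comp]

/-- A partial silting object lies in `T^{⊥_{>0}}`. -/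
lemma self_mem_objPerpGT {T : C} (hT : IsPartialSilting T) : T ∈ objPerpGT T := by
  apply hT.ps2
  intro A hA f
  have h0 : f ≫ (shiftFunctorZero C ℤ).inv.app A = 0 :=
    hA T rfl 0 (by exact le_refl (0 : ℤ)) _
  have h2 : f = (f ≫ (shiftFunctorZero C ℤ).inv.app A) ≫ (shiftFunctorZero C ℤ).hom.app A := by
    rw [Category.assoc, Iso.inv_hom_id_app]
    exact (Category.comp_id f).symm
  rw [h2, h0, zero_comp]

/-- If every map `Y ⟶ Z⟦1⟧` vanishes, every map `Y⟦-1⟧ ⟶ Z` vanishes. -/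
lemma shift_neg_one_hom_zero {Y Z : C} (h : ∀ v : Y ⟶ (Z⟦(1 : ℤ)⟧), v = 0)
    (g : (Y⟦(-1 : ℤ)⟧) ⟶ Z) : g = 0 := by
  set E := shiftFunctorCompIsoId C (-1 : ℤ) (1 : ℤ) (by ring) with hE
  have hv : E.inv.app Y ≫ (shiftFunctor C (1 : ℤ)).map g = 0 := h _
  have hmap : (shiftFunctor C (1 : ℤ)).map g = 0 := by
    have h2 : (shiftFunctor C (1 : ℤ)).map g =
        E.hom.app Y ≫ (E.inv.app Y ≫ (shiftFunctor C (1 : ℤ)).map g) := by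
      rw [← Category.assoc, Iso.hom_inv_id_app]
      exact (Category.id_comp _).symm
    rw [h2, hv, comp_zero]
  apply (shiftFunctor C (1 : ℤ)).map_injective
  rw [hmap, Functor.map_zero]

/-- Transport vanishing of homs along a shift addition isomorphism. -/
lemma hom_shift_shift_zero {T Z : C} {a b c : ℤ} (hc : a + b = c)
    (h : ∀ w : T ⟶ (Z⟦c⟧), w = 0) (f : T ⟶ ((Z⟦a⟧)⟦b⟧)) : f = 0 := by
  have h1 : f ≫ (shiftFunctorAdd' C a b c hc).inv.app Z = 0 := h _
  have h2 : f = (f ≫ (shiftFunctorAdd' C a b c hc).inv.app Z) ≫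
      (shiftFunctorAdd' C a b c hc).hom.app Z := by
    rw [Category.assoc, Iso.inv_hom_id_app]
    exact (Category.comp_id f).symm
  rw [h2, h1, zero_comp]

end Aux

/-- For a partial silting object `T` of a well generated triangulated
category satisfying dual Brown representability, the coheart of the co-t-structure
`(^⊥(T^{⊥_{>0}}), T^{⊥_{>0}})` equals `Add T`. -/
theorem statement_17 {C : Type u} [Category.{v} C] [HasZeroObject C] [HasShift C ℤ]
    [Preadditive C] [∀ n : ℤ, (CategoryTheory.shiftFunctor C n).Additive] [Pretriangulated C]
    [HasCoproducts.{v} C]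
    (hWG : WellGenerated C) (hDB : DualBrownRepresentability C)
    (T : C) (hT : IsPartialSilting T) :
    Coheart (leftPerp (objPerpGT T)) (objPerpGT T) = AddClosure T := by
  apply Set.eq_of_subset_of_subset
  · -- Coheart ⊆ Add T
    rintro X ⟨hX1, hX2⟩
    obtain ⟨Z, g, h, hdist⟩ :=
      Pretriangulated.distinguished_cocone_triangle
        (Sigma.desc (fun w : (T ⟶ X) => w) : (∐ fun _ : (T ⟶ X) => T) ⟶ X)
    have hA : (∐ fun _ : (T ⟶ X) => T) ∈ objPerpGT T :=
      hT.ps3 _ (Cofan.mk (∐ fun _ : (T ⟶ X) => T) (Sigma.ι (fun _ : (T ⟶ X) => T)))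
        (coproductIsCoproduct _) (fun _ => self_mem_objPerpGT hT)
    -- Hom(T, Z⟦k⟧) = 0 for all k ≥ 0
    have hZ : ∀ k : ℤ, 0 ≤ k → ∀ u : T ⟶ (Z⟦k⟧), u = 0 := by
      intro k hk u
      rcases hk.lt_or_eq with hk' | hk'
      · -- 0 < k : use the shifted triangle
        have hTr := Pretriangulated.Triangle.shift_distinguished _ hdist k
        have hm3 : (u : T ⟶ ((CategoryTheory.shiftFunctor (Triangle C) k).obj
            (Triangle.mk (Sigma.desc (fun w : (T ⟶ X) => w)) g h)).obj₃) ≫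
            ((CategoryTheory.shiftFunctor (Triangle C) k).obj
            (Triangle.mk (Sigma.desc (fun w : (T ⟶ X) => w)) g h)).mor₃ = 0 := by
          have hz : ∀ w : T ⟶ ((((∐ fun _ : (T ⟶ X) => T)⟦k⟧))⟦(1 : ℤ)⟧), w = 0 :=
            hom_shift_shift_zero rfl
              (fun w => hA T rfl (k + 1) (by exact Int.lt_add_one_of_le hk) w)
          exact hz _
        obtain ⟨v, hv⟩ := Pretriangulated.Triangle.coyoneda_exact₃ _ hTr u hm3
        have hv0 : v = 0 := hX2 T rfl k (by exact hk') v
        rw [hv, hv0, zero_comp]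
        exact rfl
      · -- k = 0
        subst hk'
        have hmor : ((u ≫ (shiftFunctorZero C ℤ).hom.app Z : T ⟶ Z) :
            T ⟶ (Triangle.mk (Sigma.desc (fun w : (T ⟶ X) => w)) g h).obj₃) ≫
            (Triangle.mk (Sigma.desc (fun w : (T ⟶ X) => w)) g h).mor₃ = 0 :=
          hA T rfl (1 : ℤ) (by exact Int.one_pos) _
        obtain ⟨v, hv⟩ := Pretriangulated.Triangle.coyoneda_exact₃ _ hdist _ hmor
        -- v : T ⟶ X factors through the coproduct
        have hfac : v = Sigma.ι (fun _ : (T ⟶ X) => T) v ≫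
            Sigma.desc (fun w : (T ⟶ X) => w) :=
          (Sigma.ι_desc (f := fun _ : (T ⟶ X) => T) (fun w : (T ⟶ X) => (w : T ⟶ X)) v).symm
        have hfg : Sigma.desc (fun w : (T ⟶ X) => (w : T ⟶ X)) ≫ g = 0 :=
          Pretriangulated.comp_distTriang_mor_zero₁₂ _ hdist
        have hu0 : u ≫ (shiftFunctorZero C ℤ).hom.app Z = 0 := by
          have hm2 : (Triangle.mk (Sigma.desc (fun w : (T ⟶ X) => (w : T ⟶ X))) g h).mor₂
              = g := rfl
          have key : ∀ v' : T ⟶ X, v' ≫ g = 0 := fun v' => by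
            rw [(Sigma.ι_desc (f := fun _ : (T ⟶ X) => T) (fun w : (T ⟶ X) => (w : T ⟶ X)) v').symm,
              Category.assoc, hfg, comp_zero]
          rw [hv]
          exact key v
        have h2 : u = (u ≫ (shiftFunctorZero C ℤ).hom.app Z) ≫
            (shiftFunctorZero C ℤ).inv.app Z := by
          rw [Category.assoc, Iso.hom_inv_id_app]
          exact (Category.comp_id u).symm
        rw [h2, hu0, zero_comp]
    -- Z⟦-1⟧ ∈ objPerpGT T
    have hZneg : (Z⟦(-1 : ℤ)⟧) ∈ objPerpGT T := by
      intro A' hA' m hm w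
      have hm' : 0 < m := hm
      subst hA'
      exact hom_shift_shift_zero (c := -1 + m) rfl
        (fun w' => hZ (-1 + m) (by omega) w') w
    -- g = 0
    have hg0 : g = 0 := by
      have h0 := hX1 (Z⟦(-1 : ℤ)⟧) hZneg ((shiftFunctor C (-1 : ℤ)).map g)
      apply (shiftFunctor C (-1 : ℤ)).map_injective
      rw [h0, Functor.map_zero]
    -- X is a retract of the coproduct
    obtain ⟨s, hs⟩ := Pretriangulated.Triangle.coyoneda_exact₂ _ hdist
      (𝟙 X) (by
        show 𝟙 X ≫ g = 0
        rw [hg0, comp_zero])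
    exact ⟨(T ⟶ X), Cofan.mk (∐ fun _ : (T ⟶ X) => T) (Sigma.ι (fun _ : (T ⟶ X) => T)),
      ⟨coproductIsCoproduct _⟩, s, Sigma.desc (fun w : (T ⟶ X) => w), hs.symm⟩
  · -- Add T ⊆ Coheart
    rintro Y ⟨ι, c, ⟨hc⟩, i, r, hir⟩
    have hPt : c.pt ∈ objPerpGT T := hT.ps3 _ c hc (fun _ => self_mem_objPerpGT hT)
    have hY : Y ∈ objPerpGT T := objPerpGT_retract hPt ⟨i, r, hir⟩
    refine ⟨?_, hY⟩
    -- Y⟦-1⟧ ∈ leftPerp (objPerpGT T)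
    intro Z hZ g
    apply shift_neg_one_hom_zero (h := ?_) g
    intro v
    -- every map Y ⟶ Z⟦1⟧ is zero
    have hpt : ∀ w : c.pt ⟶ (Z⟦(1 : ℤ)⟧), w = 0 := by
      intro w
      refine hc.hom_ext fun ⟨j⟩ => ?_
      have hz : c.inj j ≫ w = 0 := hZ T rfl (1 : ℤ) (by exact Int.one_pos) _
      rw [comp_zero]
      exact hz
    have h2 : v = i ≫ (r ≫ v) := by rw [← Category.assoc, hir, Category.id_comp]
    rw [h2, hpt (r ≫ v), comp_zero]

end PaperSmashing
end
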